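/- In the Tamari lattice, any tree u with t ≤ u ≤ w, where t = t₀ ∘ (t₁,…,t_r) and w = w₀ ∘ (w₁,…,w_r) with |tᵢ| = |wᵢ| = nᵢ leaves for each 1 ≤ i ≤ r and t₀, w₀ having r leaves, is itself of the form u = u₀ ∘ (u₁,…,u_r) with u₀ having r leaves and uᵢ having nᵢ leaves. -/

import Mathlib

open Classical

/-- Planar binary rooted trees. `leaf` is the unique tree `|` with one leaf. -/
inductive PBT : Type
  | leaf : PBT
  | node : PBT → PBT → PBT
  deriving DecidableEq

/-- Number of leaves of a planar binary rooted tree. -/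
def leavesCount : PBT → ℕ
  | .leaf => 1
  | .node l r => leavesCount l + leavesCount r

/-- Graft the tree `w` onto the leftmost (first) leaf of `t`. -/
def graft1 : PBT → PBT → PBT
  | .leaf, w => w
  | .node l r, w => .node (graft1 l w) r

/-- The product `t ⋋ w := w ∘₁ (t ∨ |)`. -/
def lprod (t w : PBT) : PBT := graft1 w (.node t .leaf)

/-- A tree is `⋋`-irreducible if it is not a product of two (nonempty) trees. -/
def Irr (t : PBT) : Prop := ¬ ∃ u w : PBT, t = lprod u w

/-- One covering move of the Tamari order: a right rotation
`(a ∨ b) ∨ c ↦ a ∨ (b ∨ c)` applied at some internal node. -/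
inductive TStep : PBT → PBT → Prop
  | rot (a b c : PBT) : TStep (.node (.node a b) c) (.node a (.node b c))
  | left {a a' : PBT} (c : PBT) : TStep a a' → TStep (.node a c) (.node a' c)
  | right (a : PBT) {c c' : PBT} : TStep c c' → TStep (.node a c) (.node a c')

/-- The Tamari order on planar binary rooted trees: the reflexive transitive
closure of the rotation moves. -/
def tle : PBT → PBT → Prop := Relation.ReflTransGen TStep

/-- Auxiliary function: graft trees from the list `ws` onto the leaves of `t`
from left to right, returning the resulting tree and the unused trees. -/
def graftAux : PBT → List PBT → PBT × List PBT
  | .leaf, [] => (.leaf, [])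
  | .leaf, w :: ws => (w, ws)
  | .node l r, ws =>
      let p := graftAux l ws
      let q := graftAux r p.2
      (.node p.1 q.1, q.2)

/-- The grafting `t ∘ (w₁, …, w_r)`: graft the trees of the list `ws`
onto the leaves of `t`, from left to right. -/
def graftMany (t : PBT) (ws : List PBT) : PBT := (graftAux t ws).1

theorem lc_pos (t : PBT) : 1 ≤ leavesCount t := by
  induction t with
  | leaf => simp [leavesCount]
  | node l r ihl ihr => simp only [leavesCount]; omega

/-- `Nd u i a b`: the tree `u` (occupying leaf positions `(0, |u|]`) has an
internal node at infix position `i` whose subtree spans leaves `(a, b]`. -/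
inductive Nd : PBT → ℕ → ℕ → ℕ → Prop
  | root (L R : PBT) : Nd (.node L R) (leavesCount L) 0 (leavesCount L + leavesCount R)
  | left {L : PBT} (R : PBT) {i a b : ℕ} : Nd L i a b → Nd (.node L R) i a b
  | right (L : PBT) {R : PBT} {i a b : ℕ} : Nd R i a b →
      Nd (.node L R) (i + leavesCount L) (a + leavesCount L) (b + leavesCount L)

theorem nd_congr {u : PBT} {i a b i' a' b' : ℕ} (h : Nd u i a b)
    (hi : i = i') (ha : a = a') (hb : b = b') : Nd u i' a' b' := by
  subst hi; subst ha; subst hb; exact h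

theorem nd_bounds {u : PBT} {i a b : ℕ} (h : Nd u i a b) :
    a < i ∧ i < b ∧ b ≤ leavesCount u := by
  induction h with
  | root L R => refine ⟨lc_pos L, ?_, le_refl _⟩; have := lc_pos R; omega
  | left R h ih => simp only [leavesCount]; have := lc_pos R; omega
  | right L h ih => simp only [leavesCount]; omega


theorem nd_inv {L R : PBT} {i a b : ℕ} (h : Nd (.node L R) i a b) :
    (i = leavesCount L ∧ a = 0 ∧ b = leavesCount L + leavesCount R) ∨
    (Nd L i a b) ∨
    (∃ i' a' b', i = i' + leavesCount L ∧ a = a' + leavesCount L ∧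
      b = b' + leavesCount L ∧ Nd R i' a' b') := by
  cases h with
  | root => exact Or.inl ⟨rfl, rfl, rfl⟩
  | left _ h => exact Or.inr (Or.inl h)
  | right _ h => exact Or.inr (Or.inr ⟨_, _, _, rfl, rfl, rfl, h⟩)

theorem nd_unique {u : PBT} {i a b a' b' : ℕ} (h1 : Nd u i a b) (h2 : Nd u i a' b') :
    a = a' ∧ b = b' := by
  induction u generalizing i a b a' b' with
  | leaf => cases h1
  | node L R ihL ihR =>
    rcases nd_inv h1 with ⟨hi, ha, hb⟩ | h | ⟨i1, a1, b1, hi, ha, hb, h⟩ <;>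
      rcases nd_inv h2 with ⟨hi', ha', hb'⟩ | h' | ⟨i2, a2, b2, hi', ha', hb', h'⟩
    · omega
    · have := nd_bounds h'; omega
    · have := nd_bounds h'; omega
    · have := nd_bounds h; omega
    · exact ihL h h'
    · have := nd_bounds h; have := nd_bounds h'; omega
    · have := nd_bounds h; omega
    · have := nd_bounds h; have := nd_bounds h'; omega
    · have : i1 = i2 := by omega
      subst this
      obtain ⟨e1, e2⟩ := ihR h h'
      omega

theorem nd_exists {u : PBT} {i : ℕ} (h1 : 0 < i) (h2 : i < leavesCount u) :
    ∃ a b, Nd u i a b := by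
  induction u generalizing i with
  | leaf => simp [leavesCount] at h2; omega
  | node L R ihL ihR =>
    simp only [leavesCount] at h2
    rcases lt_trichotomy i (leavesCount L) with h | h | h
    · obtain ⟨a, b, hn⟩ := ihL h1 h
      exact ⟨a, b, Nd.left R hn⟩
    · exact ⟨0, leavesCount L + leavesCount R, h ▸ Nd.root L R⟩
    · obtain ⟨a, b, hn⟩ := ihR (i := i - leavesCount L) (by omega) (by omega)
      exact ⟨a + leavesCount L, b + leavesCount L,
        nd_congr (Nd.right L hn) (by omega) rfl rfl⟩

theorem nd_nested {u : PBT} {i a b j : ℕ} (h : Nd u i a b) (h1 : a < j) (h2 : j < b) :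
    ∃ aj bj, Nd u j aj bj ∧ a ≤ aj ∧ bj ≤ b := by
  induction h generalizing j with
  | root L R =>
    obtain ⟨aj, bj, hn⟩ := nd_exists (u := PBT.node L R) h1 (by simpa [leavesCount] using h2)
    have := nd_bounds hn
    exact ⟨aj, bj, hn, by omega, by simpa [leavesCount] using this.2.2⟩
  | left R h ih =>
    obtain ⟨aj, bj, hn, ha, hb⟩ := ih h1 h2
    exact ⟨aj, bj, Nd.left R hn, ha, hb⟩
  | right L h ih =>
    obtain ⟨aj, bj, hn, ha, hb⟩ := ih (j := j - leavesCount L) (by omega) (by omega)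
    exact ⟨aj + leavesCount L, bj + leavesCount L,
      nd_congr (Nd.right L hn) (by omega) rfl rfl, by omega, by omega⟩

theorem tstep_lc {x y : PBT} (h : TStep x y) : leavesCount x = leavesCount y := by
  induction h with
  | rot a b c => simp only [leavesCount]; omega
  | left c h ih => simp only [leavesCount]; omega
  | right a h ih => simp only [leavesCount]; omega

theorem tstep_nd {x y : PBT} (h : TStep x y) :
    ∀ i a b, Nd x i a b → ∃ a' b', Nd y i a' b' ∧ a ≤ a' ∧ b ≤ b' := by
  induction h with
  | rot A B C =>
    intro i a b hnd
    rcases nd_inv hnd with ⟨hi, ha, hb⟩ | h | ⟨i1, a1, b1, hi, ha, hb, h⟩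
    · -- root of (node (node A B) C), i = lc A + lc B
      refine ⟨leavesCount A, leavesCount B + leavesCount C + leavesCount A,
        nd_congr (Nd.right A (Nd.root B C)) ?_ (by omega) rfl, by omega, ?_⟩
      · simp only [leavesCount] at hi ⊢; omega
      · simp only [leavesCount] at hb; omega
    · -- node inside (node A B)
      rcases nd_inv h with ⟨hi, ha, hb⟩ | h' | ⟨i2, a2, b2, hi, ha, hb, h'⟩
      · -- root of node A B : maps to root of y
        refine ⟨0, leavesCount A + (leavesCount B + leavesCount C),
          nd_congr (Nd.root A (.node B C)) ?_ rfl ?_, by omega, ?_⟩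
        · omega
        · simp [leavesCount]
        · omega
      · exact ⟨a, b, Nd.left _ h', le_refl _, le_refl _⟩
      · refine ⟨a, b, nd_congr (Nd.right A (Nd.left C h')) ?_ ?_ ?_, le_refl _, le_refl _⟩ <;> omega
    · -- node inside C
      simp only [leavesCount] at hi ha hb
      refine ⟨a, b, nd_congr (Nd.right A (Nd.right B h)) ?_ ?_ ?_, le_refl _, le_refl _⟩ <;> omega
  | left C hst ih =>
    intro i a b hnd
    rcases nd_inv hnd with ⟨hi, ha, hb⟩ | h | ⟨i1, a1, b1, hi, ha, hb, h⟩
    · refine ⟨0, _, nd_congr (Nd.root _ C) ?_ rfl rfl, by omega, by rw [tstep_lc hst] at hb; omega⟩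
      rw [tstep_lc hst] at hi; omega
    · obtain ⟨a', b', hn, h1, h2⟩ := ih _ _ _ h
      exact ⟨a', b', Nd.left C hn, h1, h2⟩
    · refine ⟨a, b, nd_congr (Nd.right _ h) ?_ ?_ ?_, le_refl _, le_refl _⟩ <;>
        rw [← tstep_lc hst] <;> omega
  | right A hst ih =>
    intro i a b hnd
    rcases nd_inv hnd with ⟨hi, ha, hb⟩ | h | ⟨i1, a1, b1, hi, ha, hb, h⟩
    · refine ⟨0, _, nd_congr (Nd.root A _) ?_ rfl rfl, by omega, ?_⟩
      · omega
      · rw [← tstep_lc hst]; omega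
    · exact ⟨a, b, Nd.left _ h, le_refl _, le_refl _⟩
    · obtain ⟨a', b', hn, h1, h2⟩ := ih _ _ _ h
      exact ⟨a' + leavesCount A, b' + leavesCount A,
        nd_congr (Nd.right A hn) (by omega) rfl rfl, by omega, by omega⟩

theorem tle_lc {x y : PBT} (h : tle x y) : leavesCount x = leavesCount y := by
  induction h with
  | refl => rfl
  | tail _ hstep ih => exact ih.trans (tstep_lc hstep)

theorem tle_nd {x y : PBT} (h : tle x y) :
    ∀ i a b, Nd x i a b → ∃ a' b', Nd y i a' b' ∧ a ≤ a' ∧ b ≤ b' := by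
  induction h with
  | refl => exact fun i a b h => ⟨a, b, h, le_refl _, le_refl _⟩
  | tail _ hstep ih =>
    intro i a b hnd
    obtain ⟨a', b', hn, h1, h2⟩ := ih _ _ _ hnd
    obtain ⟨a'', b'', hn', h1', h2'⟩ := tstep_nd hstep _ _ _ hn
    exact ⟨a'', b'', hn', h1.trans h1', h2.trans h2'⟩

/-- Partial sums of a list of block sizes. -/
def Tk (ns : List ℕ) (m : ℕ) : ℕ := (ns.take m).sum

theorem Tk_zero (ns : List ℕ) : Tk ns 0 = 0 := rfl

theorem Tk_add (ns : List ℕ) (m k : ℕ) : Tk ns (m + k) = Tk ns m + Tk (ns.drop m) k := by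
  simp [Tk, List.take_add]

theorem Tk_mono {ns : List ℕ} {m m' : ℕ} (h : m ≤ m') : Tk ns m ≤ Tk ns m' := by
  have : m' = m + (m' - m) := by omega
  rw [this, Tk_add]; omega

theorem lt_of_Tk_lt {ns : List ℕ} {m m' : ℕ} (h : Tk ns m < Tk ns m') : m < m' := by
  by_contra hc
  exact absurd (Tk_mono (ns := ns) (by omega : m' ≤ m)) (by omega)

theorem Tk_len (ns : List ℕ) : Tk ns ns.length = ns.sum := by
  simp [Tk]

theorem Tk_le_sum (ns : List ℕ) (m : ℕ) : Tk ns m ≤ ns.sum := by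
  rcases le_or_gt m ns.length with h | h
  · rw [← Tk_len]; exact Tk_mono h
  · simp [Tk, List.take_of_length_le (le_of_lt h)]

theorem Tk_succ {ns : List ℕ} (hpos : ∀ x ∈ ns, 1 ≤ x) {m : ℕ} (hm : m < ns.length) :
    Tk ns m + 1 ≤ Tk ns (m + 1) := by
  rw [Tk_add]
  have hne : ns.drop m ≠ [] := by
    intro hc; have := List.drop_eq_nil_iff.mp hc; omega
  obtain ⟨x, l, hxl⟩ := List.exists_cons_of_ne_nil hne
  have hx : 1 ≤ x := hpos x (by
    have : x ∈ ns.drop m := by rw [hxl]; exact List.mem_cons_self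
    exact List.mem_of_mem_drop this)
  have : Tk (ns.drop m) 1 = x := by rw [hxl]; simp [Tk]
  omega

theorem Tk_take (ns : List ℕ) (k m : ℕ) : Tk (ns.take k) m = Tk ns (min m k) := by
  simp [Tk, List.take_take]

theorem Tk_drop (ns : List ℕ) (k m : ℕ) : Tk ns (k + m) = Tk ns k + Tk (ns.drop k) m :=
  Tk_add ns k m

/-- `x` is a block boundary. -/
def IsBd (ns : List ℕ) (x : ℕ) : Prop := ∃ m, x = Tk ns m

theorem isbd_ge {ns : List ℕ} {x k : ℕ} (h : IsBd ns x) (hx : Tk ns k < x) :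
    Tk ns (k + 1) ≤ x := by
  obtain ⟨m, rfl⟩ := h
  exact Tk_mono (lt_of_Tk_lt hx)

theorem isbd_le {ns : List ℕ} {x k : ℕ} (h : IsBd ns x) (hx : x < Tk ns (k + 1)) :
    x ≤ Tk ns k := by
  obtain ⟨m, rfl⟩ := h
  have := lt_of_Tk_lt hx
  exact Tk_mono (by omega)

theorem not_isbd {ns : List ℕ} {x m : ℕ} (h1 : Tk ns m < x) (h2 : x < Tk ns (m + 1)) :
    ¬ IsBd ns x := by
  rintro ⟨j, rfl⟩
  have := lt_of_Tk_lt h1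
  have := lt_of_Tk_lt h2
  omega

theorem exists_interval {ns : List ℕ} (hpos : ∀ x ∈ ns, 1 ≤ x) {x : ℕ}
    (hx : x ≤ ns.sum) (h : ¬ IsBd ns x) :
    ∃ m, m < ns.length ∧ Tk ns m < x ∧ x < Tk ns (m + 1) := by
  induction ns generalizing x with
  | nil => exact absurd ⟨0, by simpa [Tk] using hx⟩ h
  | cons n ns ih =>
    have hTk1 : Tk (n :: ns) 1 = n := by simp [Tk]
    have hTkc : ∀ m, Tk (n :: ns) (m + 1) = n + Tk ns m := by
      intro m; simp [Tk, List.sum_cons]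
    have hx0 : x ≠ 0 := fun hc => h ⟨0, by simp [Tk, hc]⟩
    rcases lt_trichotomy x n with hlt | heq | hgt
    · exact ⟨0, by simp, by rw [Tk_zero]; omega, by rw [hTkc, Tk_zero]; omega⟩
    · exact absurd ⟨1, by rw [hTk1, heq]⟩ h
    · have hsum : x - n ≤ ns.sum := by simp [List.sum_cons] at hx; omega
      have hnb : ¬ IsBd ns (x - n) := by
        rintro ⟨m, hm⟩
        exact h ⟨m + 1, by rw [hTkc]; omega⟩
      obtain ⟨m, hm, h1, h2⟩ := ih (fun y hy => hpos y (List.mem_cons_of_mem n hy)) hsum hnb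
      exact ⟨m + 1, by simp; omega, by rw [hTkc]; omega, by rw [hTkc]; omega⟩

/-- The per-node condition characterizing decomposability. -/
def Cond (ns : List ℕ) (i a b : ℕ) : Prop :=
  (IsBd ns i ∧ IsBd ns a ∧ IsBd ns b) ∨
  (∃ m, m < ns.length ∧ Tk ns m ≤ a ∧ b ≤ Tk ns (m + 1))

theorem cond_of_take {ns : List ℕ} {k i a b : ℕ} (hk : k ≤ ns.length)
    (h : Cond (ns.take k) i a b) : Cond ns i a b := by
  rcases h with ⟨⟨mi, hi⟩, ⟨ma, ha⟩, ⟨mb, hb⟩⟩ | ⟨m, hm, h1, h2⟩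
  · exact Or.inl ⟨⟨min mi k, by rw [hi, Tk_take]⟩, ⟨min ma k, by rw [ha, Tk_take]⟩,
      ⟨min mb k, by rw [hb, Tk_take]⟩⟩
  · rw [List.length_take] at hm
    refine Or.inr ⟨m, by omega, ?_, ?_⟩
    · rw [Tk_take, min_eq_left (by omega)] at h1; exact h1
    · rw [Tk_take, min_eq_left (by omega)] at h2; exact h2

theorem cond_of_drop {ns : List ℕ} {k i a b : ℕ} (hk : k ≤ ns.length)
    (h : Cond (ns.drop k) i a b) :
    Cond ns (i + Tk ns k) (a + Tk ns k) (b + Tk ns k) := by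
  rcases h with ⟨⟨mi, hi⟩, ⟨ma, ha⟩, ⟨mb, hb⟩⟩ | ⟨m, hm, h1, h2⟩
  · exact Or.inl ⟨⟨k + mi, by rw [Tk_drop, hi]; omega⟩, ⟨k + ma, by rw [Tk_drop, ha]; omega⟩,
      ⟨k + mb, by rw [Tk_drop, hb]; omega⟩⟩
  · rw [List.length_drop] at hm
    refine Or.inr ⟨k + m, by omega, ?_, ?_⟩
    · rw [Tk_drop]; omega
    · have : k + m + 1 = k + (m + 1) := by omega
      rw [this, Tk_drop]; omega

theorem cond_take_of {ns : List ℕ} {k i a b : ℕ} (hk : k ≤ ns.length)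
    (hb' : b ≤ Tk ns k) (hai : a < i) (hib : i < b) (h : Cond ns i a b) :
    Cond (ns.take k) i a b := by
  have key : ∀ x, x ≤ Tk ns k → IsBd ns x → IsBd (ns.take k) x := by
    rintro x hx ⟨m, rfl⟩
    rcases le_or_gt m k with h' | h'
    · exact ⟨m, by rw [Tk_take, min_eq_left h']⟩
    · exact ⟨k, by rw [Tk_take, min_self]; exact le_antisymm hx (Tk_mono h'.le)⟩
  rcases h with ⟨hi, ha, hbd⟩ | ⟨m, hm, h1, h2⟩
  · exact Or.inl ⟨key i (by omega) hi, key a (by omega) ha, key b hb' hbd⟩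
  · rcases le_or_gt (m + 1) k with h' | h'
    · refine Or.inr ⟨m, ?_, ?_, ?_⟩
      · rw [List.length_take]; omega
      · rw [Tk_take, min_eq_left (by omega)]; exact h1
      · rw [Tk_take, min_eq_left h']; exact h2
    · exfalso
      have : Tk ns k ≤ Tk ns m := Tk_mono (by omega)
      omega

theorem cond_drop_of {ns : List ℕ} {k i a b : ℕ} (hk : k ≤ ns.length) (hab : a < b)
    (h : Cond ns (i + Tk ns k) (a + Tk ns k) (b + Tk ns k)) : Cond (ns.drop k) i a b := by
  have key : ∀ x, IsBd ns (x + Tk ns k) → IsBd (ns.drop k) x := by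
    rintro x ⟨m, hm⟩
    rcases le_or_gt k m with h' | h'
    · refine ⟨m - k, ?_⟩
      have := Tk_drop ns k (m - k)
      rw [(by omega : k + (m - k) = m)] at this
      omega
    · have : Tk ns m ≤ Tk ns k := Tk_mono h'.le
      have hx0 : x = 0 := by omega
      exact ⟨0, by rw [hx0, Tk_zero]⟩
  rcases h with ⟨hi, ha, hb⟩ | ⟨m, hm, h1, h2⟩
  · exact Or.inl ⟨key i hi, key a ha, key b hb⟩
  · rcases le_or_gt k m with h' | h'
    · refine Or.inr ⟨m - k, ?_, ?_, ?_⟩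
      · rw [List.length_drop]; omega
      · have := Tk_drop ns k (m - k)
        rw [(by omega : k + (m - k) = m)] at this
        omega
      · have := Tk_drop ns k (m - k + 1)
        rw [(by omega : k + (m - k + 1) = m + 1)] at this
        omega
    · exfalso
      have : Tk ns (m + 1) ≤ Tk ns k := Tk_mono (by omega)
      omega

theorem graftAux_spec : ∀ (t : PBT) (ws : List PBT), leavesCount t ≤ ws.length →
    graftAux t ws = (graftMany t (ws.take (leavesCount t)), ws.drop (leavesCount t)) := by
  intro t
  induction t with
  | leaf =>
    intro ws hw
    cases ws with
    | nil => simp [leavesCount] at hw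
    | cons w ws => simp [graftAux, graftMany, leavesCount]
  | node l r ihl ihr =>
    intro ws hw
    simp only [leavesCount] at hw ⊢
    have hl : leavesCount l ≤ ws.length := by omega
    have hr' : leavesCount r ≤ (ws.drop (leavesCount l)).length := by
      rw [List.length_drop]; omega
    have e1 : graftAux (PBT.node l r) ws
        = (.node (graftAux l ws).1 ((graftAux r (graftAux l ws).2).1),
           (graftAux r (graftAux l ws).2).2) := rfl
    rw [e1, ihl ws hl]
    simp only
    rw [ihr _ hr']
    have tk : (ws.take (leavesCount l + leavesCount r)).length
        = leavesCount l + leavesCount r := by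
      rw [List.length_take]; omega
    have e2 : graftMany (PBT.node l r) (ws.take (leavesCount l + leavesCount r))
        = .node (graftAux l (ws.take (leavesCount l + leavesCount r))).1
            ((graftAux r (graftAux l (ws.take (leavesCount l + leavesCount r))).2).1) := rfl
    rw [e2, ihl _ (by omega), ihr _ (by rw [List.length_drop]; omega)]
    simp only
    have h3 : (ws.take (leavesCount l + leavesCount r)).take (leavesCount l)
        = ws.take (leavesCount l) := by
      rw [List.take_take, min_eq_left (by omega)]
    have h4 : (ws.take (leavesCount l + leavesCount r)).drop (leavesCount l)
        = (ws.drop (leavesCount l)).take (leavesCount r) := by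
      rw [List.drop_take]; congr 1; omega
    rw [h3, h4]
    have h5 : ((ws.drop (leavesCount l)).take (leavesCount r)).take (leavesCount r)
        = (ws.drop (leavesCount l)).take (leavesCount r) := by
      rw [List.take_take, min_self]
    rw [h5]
    have h6 : (ws.drop (leavesCount l)).drop (leavesCount r)
        = ws.drop (leavesCount l + leavesCount r) := by
      rw [List.drop_drop]
    rw [h6]

theorem graftMany_leaf (w : PBT) : graftMany .leaf [w] = w := rfl

theorem graftMany_node_append {L0 R0 : PBT} {us1 us2 : List PBT}
    (h1 : us1.length = leavesCount L0) (h2 : us2.length = leavesCount R0) :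
    graftMany (.node L0 R0) (us1 ++ us2) = .node (graftMany L0 us1) (graftMany R0 us2) := by
  have e : graftMany (PBT.node L0 R0) (us1 ++ us2)
      = .node (graftAux L0 (us1 ++ us2)).1 ((graftAux R0 (graftAux L0 (us1 ++ us2)).2).1) := rfl
  rw [e, graftAux_spec L0 _ (by rw [List.length_append]; omega)]
  simp only
  have h3 : (us1 ++ us2).take (leavesCount L0) = us1 := by
    rw [← h1, List.take_left]
  have h4 : (us1 ++ us2).drop (leavesCount L0) = us2 := by
    rw [← h1, List.drop_left]
  rw [h3, h4, graftAux_spec R0 _ (by omega)]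
  simp only
  rw [List.take_of_length_le (by omega)]

theorem lc_graftMany : ∀ (t : PBT) (ws : List PBT), ws.length = leavesCount t →
    leavesCount (graftMany t ws) = (ws.map leavesCount).sum := by
  intro t
  induction t with
  | leaf =>
    intro ws hw
    simp only [leavesCount] at hw
    cases ws with
    | nil => simp at hw
    | cons w ws' =>
      cases ws' with
      | nil => simp [graftMany_leaf]
      | cons => simp at hw
  | node l r ihl ihr =>
    intro ws hw
    simp only [leavesCount] at hw
    have hsplit : ws = ws.take (leavesCount l) ++ ws.drop (leavesCount l) :=
      (List.take_append_drop _ _).symm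
    have hl1 : (ws.take (leavesCount l)).length = leavesCount l := by
      rw [List.length_take]; omega
    have hl2 : (ws.drop (leavesCount l)).length = leavesCount r := by
      rw [List.length_drop]; omega
    rw [hsplit, graftMany_node_append hl1 hl2]
    simp only [leavesCount]
    rw [ihl _ hl1, ihr _ hl2, ← List.sum_append, ← List.map_append]

theorem cond_graftMany : ∀ (t0 : PBT) (ts : List PBT), ts.length = leavesCount t0 →
    ∀ i a b, Nd (graftMany t0 ts) i a b → Cond (ts.map leavesCount) i a b := by
  intro t0
  induction t0 with
  | leaf =>
    intro ts hts i a b h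
    simp only [leavesCount] at hts
    match ts, hts with
    | [t], _ =>
      rw [graftMany_leaf] at h
      have hb := nd_bounds h
      refine Or.inr ⟨0, by simp, by simp [Tk], ?_⟩
      have : Tk [leavesCount t] 1 = leavesCount t := by simp [Tk]
      simp only [List.map_cons, List.map_nil]
      rw [this]
      exact hb.2.2
  | node l r ihl ihr =>
    intro ts hts i a b h
    simp only [leavesCount] at hts
    set ts1 := ts.take (leavesCount l) with hts1
    set ts2 := ts.drop (leavesCount l) with hts2
    have hl1 : ts1.length = leavesCount l := by rw [hts1, List.length_take]; omega
    have hl2 : ts2.length = leavesCount r := by rw [hts2, List.length_drop]; omega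
    have hsplit : ts = ts1 ++ ts2 := (List.take_append_drop _ _).symm
    rw [hsplit, graftMany_node_append hl1 hl2] at h
    set ns := ts.map leavesCount with hns
    have hlen : ns.length = ts.length := by rw [hns, List.length_map]
    have hns1 : ts1.map leavesCount = ns.take (leavesCount l) := by
      rw [hns, hts1, List.map_take]
    have hns2 : ts2.map leavesCount = ns.drop (leavesCount l) := by
      rw [hns, hts2, List.map_drop]
    have hP : leavesCount (graftMany l ts1) = Tk ns (leavesCount l) := by
      rw [lc_graftMany l ts1 hl1, hns1, Tk]
    have hQ : leavesCount (graftMany r ts2) = ns.sum - Tk ns (leavesCount l) := by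
      rw [lc_graftMany r ts2 hl2, hns2]
      have := List.sum_take_add_sum_drop ns (leavesCount l)
      have h2 : Tk ns (leavesCount l) = (ns.take (leavesCount l)).sum := rfl
      omega
    have hTle : Tk ns (leavesCount l) ≤ ns.sum := Tk_le_sum _ _
    rcases nd_inv h with ⟨hi, ha, hb⟩ | h' | ⟨i1, a1, b1, hi, ha, hb, h'⟩
    · refine Or.inl ⟨⟨leavesCount l, by omega⟩, ⟨0, by rw [Tk_zero]; omega⟩,
        ⟨ns.length, ?_⟩⟩
      rw [Tk_len]; omega
    · have := ihl ts1 hl1 _ _ _ h'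
      rw [hns1] at this
      exact cond_of_take (by omega) this
    · have := ihr ts2 hl2 _ _ _ h'
      rw [hns2] at this
      have hc := cond_of_drop (ns := ns) (k := leavesCount l) (by omega) this
      rw [hi, ha, hb, hP]
      exact hc

theorem cond_sandwich (ns : List ℕ) (t u w : PBT)
    (hpos : ∀ x ∈ ns, 1 ≤ x)
    (hnt : leavesCount t = ns.sum) (hnu : leavesCount u = ns.sum)
    (ht : ∀ i a b, Nd t i a b → Cond ns i a b)
    (hw : ∀ i a b, Nd w i a b → Cond ns i a b)
    (htu : ∀ i a b, Nd t i a b → ∃ a' b', Nd u i a' b' ∧ a ≤ a' ∧ b ≤ b')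
    (huw : ∀ i a b, Nd u i a b → ∃ a' b', Nd w i a' b' ∧ a ≤ a' ∧ b ≤ b') :
    ∀ i a b, Nd u i a b → Cond ns i a b := by
  -- every node of `u` has a corresponding node of `t` at the same position, below it
  have H1t : ∀ i a b, Nd u i a b → ∃ at' bt, Nd t i at' bt ∧ at' ≤ a ∧ bt ≤ b := by
    intro i a b h
    have hb := nd_bounds h
    obtain ⟨at', bt, hnd⟩ := nd_exists (u := t) (i := i) (by omega) (by omega)
    obtain ⟨a2, b2, h2, hle1, hle2⟩ := htu _ _ _ hnd
    obtain ⟨e1, e2⟩ := nd_unique h2 h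
    exact ⟨at', bt, hnd, by omega, by omega⟩
  -- lower bound at boundary positions: right end reaches the next boundary
  have H2 : ∀ j aj bj, Nd u j aj bj → ∀ k, j = Tk ns k → Tk ns (k + 1) ≤ bj := by
    intro j aj bj h k hk
    obtain ⟨at', bt, hnd, hle1, hle2⟩ := H1t _ _ _ h
    have hbt := nd_bounds hnd
    rcases ht _ _ _ hnd with ⟨_, _, hbd⟩ | ⟨m, hm, h1, h2⟩
    · have : Tk ns k < bt := by omega
      have := isbd_ge hbd this
      omega
    · exfalso
      exact not_isbd (x := j) (m := m) (by omega) (by omega) ⟨k, hk⟩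
  -- upper bound at boundary positions: left end reaches back to the previous boundary
  have H2' : ∀ j aj bj, Nd u j aj bj → ∀ k, j = Tk ns (k + 1) → aj ≤ Tk ns k := by
    intro j aj bj h k hk
    obtain ⟨aw, bw, hnd, hle1, hle2⟩ := huw _ _ _ h
    have hbw := nd_bounds hnd
    rcases hw _ _ _ hnd with ⟨_, had, _⟩ | ⟨m, hm, h1, h2⟩
    · have : aw < Tk ns (k + 1) := by omega
      have := isbd_le had this
      omega
    · exfalso
      exact not_isbd (x := j) (m := m) (by omega) (by omega) ⟨k + 1, hk⟩
  intro i a b h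
  have hb := nd_bounds h
  obtain ⟨at', bt, hndt, hle1, hle2⟩ := H1t _ _ _ h
  have hbt := nd_bounds hndt
  rcases ht _ _ _ hndt with ⟨⟨k, hik⟩, _, _⟩ | ⟨m, hm, ht1, ht2⟩
  · -- boundary position
    have hk1 : 1 ≤ k := by
      rcases Nat.eq_zero_or_pos k with h0 | h0
      · rw [h0, Tk_zero] at hik; omega
      · omega
    have hklen : k < ns.length := by
      have : Tk ns k < Tk ns ns.length := by rw [Tk_len]; omega
      exact lt_of_Tk_lt this
    refine Or.inl ⟨⟨k, hik⟩, ?_, ?_⟩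
    · -- IsBd a
      by_contra hna
      obtain ⟨m', hm', h1, h2⟩ := exists_interval hpos (x := a) (by omega) hna
      have ha1 : a ≤ Tk ns (k - 1) := by
        have := H2' _ _ _ h (k - 1) (by rw [(by omega : k - 1 + 1 = k)]; exact hik)
        omega
      have hmk : m' + 1 ≤ k - 1 := by
        have : Tk ns m' < Tk ns (k - 1) := by omega
        have := lt_of_Tk_lt this
        omega
      have hjlt : Tk ns (m' + 1) ≤ Tk ns (k - 1) := Tk_mono hmk
      have hstrict : Tk ns (k - 1) + 1 ≤ Tk ns k := by
        have := Tk_succ hpos (m := k - 1) (by omega)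
        rw [(by omega : k - 1 + 1 = k)] at this
        omega
      obtain ⟨aj, bj, hj, haj, hbj⟩ := nd_nested h (j := Tk ns (m' + 1)) (by omega) (by omega)
      have := H2' _ _ _ hj m' rfl
      omega
    · -- IsBd b
      by_contra hnb
      obtain ⟨m', hm', h1, h2⟩ := exists_interval hpos (x := b) (by omega) hnb
      have hb1 : Tk ns (k + 1) ≤ b := H2 _ _ _ h k hik
      have hbne : b ≠ Tk ns (k + 1) := fun hc => hnb ⟨k + 1, hc⟩
      have hmk : k + 1 ≤ m' := by
        have : Tk ns (k + 1) < Tk ns (m' + 1) := by omega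
        have := lt_of_Tk_lt this
        omega
      have hjge : Tk ns (k + 1) ≤ Tk ns m' := Tk_mono hmk
      have hstrict : Tk ns k + 1 ≤ Tk ns (k + 1) := Tk_succ hpos hklen
      obtain ⟨aj, bj, hj, haj, hbj⟩ := nd_nested h (j := Tk ns m') (by omega) (by omega)
      have := H2 _ _ _ hj m' rfl
      omega
  · -- interior position
    have hint : Tk ns m < i ∧ i < Tk ns (m + 1) := by omega
    have hni : ¬ IsBd ns i := not_isbd hint.1 hint.2
    obtain ⟨aw, bw, hndw, hle1', hle2'⟩ := huw _ _ _ h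
    have hbw := nd_bounds hndw
    rcases hw _ _ _ hndw with ⟨hbi, _, _⟩ | ⟨m', hm', hw1, hw2⟩
    · exact absurd hbi hni
    · have hmm : m = m' := by
        have l1 : Tk ns m < Tk ns (m' + 1) := by omega
        have l2 : Tk ns m' < Tk ns (m + 1) := by omega
        have := lt_of_Tk_lt l1
        have := lt_of_Tk_lt l2
        omega
      subst hmm
      exact Or.inr ⟨m, hm, by omega, by omega⟩

theorem recon : ∀ (u : PBT) (ns : List ℕ), (∀ x ∈ ns, 1 ≤ x) →
    ns.sum = leavesCount u →
    (∀ i a b, Nd u i a b → Cond ns i a b) →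
    ∃ u0 us, u = graftMany u0 us ∧ leavesCount u0 = ns.length ∧
      us.map leavesCount = ns := by
  intro u
  induction u with
  | leaf =>
    intro ns hpos hsum hcond
    simp only [leavesCount] at hsum
    match ns, hpos, hsum with
    | [x], hpos, hsum =>
      refine ⟨.leaf, [.leaf], (graftMany_leaf _).symm, by simp [leavesCount], ?_⟩
      simp only [List.map_cons, List.map_nil, List.sum_cons, List.sum_nil] at hsum ⊢
      simp [leavesCount]; omega
    | x :: y :: tl, hpos, hsum =>
      exfalso
      have hx := hpos x (by simp)
      have hy := hpos y (by simp)
      simp only [List.sum_cons] at hsum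
      omega
  | node L R ihL ihR =>
    intro ns hpos hsum hcond
    simp only [leavesCount] at hsum
    have hLpos := lc_pos L
    have hRpos := lc_pos R
    match ns, hpos, hsum, hcond with
    | [], _, hsum, _ => simp at hsum; omega
    | [x], _, hsum, _ =>
      refine ⟨.leaf, [.node L R], rfl, by simp [leavesCount], ?_⟩
      simp only [List.map_cons, List.map_nil, List.sum_cons, List.sum_nil] at hsum ⊢
      simp [leavesCount]; omega
    | x :: y :: tl, hpos, hsum, hcond =>
      set ns := x :: y :: tl with hns
      have hlen2 : 2 ≤ ns.length := by simp [hns]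
      have hx := hpos x (by simp [hns])
      have hy := hpos y (by simp [hns])
      have hT1 : Tk ns 1 = x := by simp [hns, Tk]
      have hT2 : Tk ns 2 = x + y := by simp [hns, Tk]
      have hsumc : ns.sum = leavesCount L + leavesCount R := hsum
      have hsum2' : x + (y + tl.sum) = ns.sum := by simp [hns]
      -- analyse the root node
      have hroot := hcond _ _ _ (Nd.root L R)
      have hkex : ∃ k, 1 ≤ k ∧ k < ns.length ∧ Tk ns k = leavesCount L := by
        rcases hroot with ⟨⟨k, hk⟩, _, _⟩ | ⟨m, hm, h0, hn⟩
        · refine ⟨k, ?_, ?_, hk.symm⟩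
          · rcases Nat.eq_zero_or_pos k with h0 | h0
            · rw [h0, Tk_zero] at hk; omega
            · omega
          · refine lt_of_Tk_lt (show Tk ns k < Tk ns ns.length from ?_)
            rw [Tk_len, ← hk]
            omega
        · exfalso
          rcases Nat.eq_zero_or_pos m with h0 | h0
          · rw [h0] at hn
            rw [hT1] at hn
            have h22 : Tk ns 2 ≤ ns.sum := Tk_le_sum ns 2
            rw [hT2] at h22
            omega
          · have hle1 : Tk ns 1 ≤ Tk ns m := Tk_mono h0
            rw [hT1] at hle1
            omega
      obtain ⟨k, hk1, hklen, hTk⟩ := hkex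
      set ns1 := ns.take k with hns1
      set ns2 := ns.drop k with hns2
      have hsum1 : ns1.sum = leavesCount L := hTk
      have hsumR : ns2.sum = leavesCount R := by
        rw [hns2]
        have := List.sum_take_add_sum_drop ns k
        have h2 : Tk ns k = (ns.take k).sum := rfl
        omega
      have hpos1 : ∀ z ∈ ns1, 1 ≤ z := fun z hz => hpos z (List.mem_of_mem_take hz)
      have hpos2 : ∀ z ∈ ns2, 1 ≤ z := fun z hz => hpos z (List.mem_of_mem_drop hz)
      have hcondL : ∀ i a b, Nd L i a b → Cond ns1 i a b := by
        intro i a b h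
        have hb := nd_bounds h
        exact cond_take_of (by omega) (by omega) (by omega) (by omega)
          (hcond _ _ _ (Nd.left R h))
      have hcondR : ∀ i a b, Nd R i a b → Cond ns2 i a b := by
        intro i a b h
        have hb := nd_bounds h
        have := hcond _ _ _ (Nd.right L h)
        rw [← hTk] at this
        exact cond_drop_of (by omega) (by omega) this
      obtain ⟨L0, us1, hL, hlcL0, hmap1⟩ := ihL ns1 hpos1 hsum1 hcondL
      obtain ⟨R0, us2, hR, hlcR0, hmap2⟩ := ihR ns2 hpos2 hsumR hcondR
      have hlenu1 : us1.length = leavesCount L0 := by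
        have := congrArg List.length hmap1
        simp only [List.length_map] at this
        omega
      have hlenu2 : us2.length = leavesCount R0 := by
        have := congrArg List.length hmap2
        simp only [List.length_map] at this
        omega
      refine ⟨.node L0 R0, us1 ++ us2, ?_, ?_, ?_⟩
      · rw [graftMany_node_append hlenu1 hlenu2, ← hL, ← hR]
      · simp only [leavesCount]
        rw [hlcL0, hlcR0, hns1, hns2, List.length_take, List.length_drop]
        omega
      · rw [List.map_append, hmap1, hmap2, hns1, hns2, List.take_append_drop]

theorem map_eq_of_forall₂ {α : Type*} {f : α → ℕ} {l1 l2 : List α}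
    (h : List.Forall₂ (fun a b => f a = f b) l1 l2) : l1.map f = l2.map f := by
  induction h with
  | nil => rfl
  | cons h _ ih => simp [ih, h]

theorem forall₂_of_map_eq {α : Type*} {f : α → ℕ} : ∀ {l1 l2 : List α},
    l1.map f = l2.map f → List.Forall₂ (fun a b => f a = f b) l1 l2 := by
  intro l1
  induction l1 with
  | nil => intro l2 h; cases l2 with
    | nil => exact List.Forall₂.nil
    | cons => simp at h
  | cons a l1 ih =>
    intro l2 h
    cases l2 with
    | nil => simp at h
    | cons b l2 =>
      simp only [List.map_cons, List.cons.injEq] at h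
      exact List.Forall₂.cons h.1 (ih h.2)


/-- Any `u` between `t₀ ∘ (t₁,…,t_r)` and `w₀ ∘ (w₁,…,w_r)` in the Tamari
order, where `|tᵢ| = |wᵢ|` for each `i` and `t₀, w₀` have `r` leaves, is itself
of the form `u₀ ∘ (u₁,…,u_r)` with `u₀` having `r` leaves and `|uᵢ| = |tᵢ|`. -/
theorem stmt8 (t0 w0 u : PBT) (ts ws : List PBT)
    (hlen : ts.length = leavesCount t0) (hlen' : ws.length = leavesCount w0)
    (hr : leavesCount t0 = leavesCount w0)
    (hsz : List.Forall₂ (fun a b => leavesCount a = leavesCount b) ts ws)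
    (h1 : tle (graftMany t0 ts) u) (h2 : tle u (graftMany w0 ws)) :
    ∃ (u0 : PBT) (us : List PBT), u = graftMany u0 us ∧
      leavesCount u0 = leavesCount t0 ∧
      List.Forall₂ (fun a b => leavesCount a = leavesCount b) us ts := by
  set ns := ts.map leavesCount with hns
  have hpos : ∀ x ∈ ns, 1 ≤ x := by
    intro x hx
    rw [hns] at hx
    obtain ⟨t, _, rfl⟩ := List.mem_map.mp hx
    exact lc_pos t
  have hmapw : ws.map leavesCount = ns := (map_eq_of_forall₂ hsz).symm
  have hnt : leavesCount (graftMany t0 ts) = ns.sum := lc_graftMany t0 ts hlen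
  have hnw : leavesCount (graftMany w0 ws) = ns.sum := by
    rw [lc_graftMany w0 ws hlen', hmapw]
  have hnu : leavesCount u = ns.sum := by rw [← tle_lc h1, hnt]
  have ht := cond_graftMany t0 ts hlen
  have hw : ∀ i a b, Nd (graftMany w0 ws) i a b → Cond ns i a b := by
    intro i a b h
    have := cond_graftMany w0 ws hlen' i a b h
    rwa [hmapw] at this
  have hcond := cond_sandwich ns (graftMany t0 ts) u (graftMany w0 ws) hpos hnt hnu
    ht hw (tle_nd h1) (tle_nd h2)
  obtain ⟨u0, us, hu, hlc0, hmap⟩ := recon u ns hpos hnu.symm hcond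
  refine ⟨u0, us, hu, ?_, ?_⟩
  · rw [hlc0, hns, List.length_map, hlen]
  · exact forall₂_of_map_eq (by rw [hmap, hns])
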